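/- arXiv:1412.5096 — 4 statements merged into one kernel-verified Lean document; each statement's English description precedes it below -/
import Mathlib

section
/- Suppose 1 ≤ m ≤ 2j+1 and gcd(m, 2j+1) = gcd(m+1, 2j+1) = 1. Then for every (s,t) ∈ Z^2, the number of lattice points of Λ(m,j) in the translate (s,t)+S(j) is exactly j. -/
def Lam (m j : ℕ) : Set (ℝ × ℝ) :=
  {p | ∃ c₁ c₂ : ℤ, p = ((c₁ : ℝ), (c₁ : ℝ) * m + (c₂ : ℝ) * (2 * j + 1))}

def Sstair (j : ℕ) : Set (ℝ × ℝ) :=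
  ⋃ i ∈ Finset.range (2 * j),
    Set.Ico (i : ℝ) ((i : ℝ) + 1) ×ˢ Set.Ico (0 : ℝ) (2 * (j : ℝ) - i)

lemma affine_injOn (a b : ℤ) (n : ℕ) (hco : IsCoprime ((n:ℤ)) b)
    (i i' : ℕ) (hi : i < n) (hi' : i' < n)
    (h : (a + b*i) % (n:ℤ) = (a + b*i') % (n:ℤ)) : i = i' := by
  have hd : (n:ℤ) ∣ (a + b*i) - (a + b*i') := by
    exact Int.dvd_of_emod_eq_zero (by rw [Int.sub_emod, h, sub_self, Int.zero_emod])
  have hd2 : (n:ℤ) ∣ b * ((i:ℤ) - i') := by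
    have : (a + b*i) - (a + b*i') = b * ((i:ℤ) - i') := by ring
    rwa [this] at hd
  have hd3 : (n:ℤ) ∣ ((i:ℤ) - i') := hco.dvd_of_dvd_mul_left hd2
  have := Int.eq_zero_of_dvd_of_natAbs_lt_natAbs hd3 (by omega)
  omega

lemma affine_image (a b : ℤ) (n : ℕ) (hn : 0 < n) (hco : IsCoprime ((n:ℤ)) b) :
    (Finset.range n).image (fun i : ℕ => (a + b*i) % (n:ℤ)) = Finset.Ico (0:ℤ) n := by
  have hN : (0:ℤ) < n := by exact_mod_cast hn
  apply Finset.eq_of_subset_of_card_le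
  · intro x hx
    simp only [Finset.mem_image, Finset.mem_range] at hx
    obtain ⟨i, hi, rfl⟩ := hx
    simp only [Finset.mem_Ico]
    exact ⟨Int.emod_nonneg _ (ne_of_gt hN), Int.emod_lt_of_pos _ hN⟩
  · rw [Finset.card_image_of_injOn, Finset.card_range]
    · simp [Int.toNat_natCast]
    · intro i hi i' hi' h
      simp only [Finset.coe_range, Set.mem_Iio] at hi hi'
      exact affine_injOn a b n hco i i' hi hi' h

lemma affine_sum (a b : ℤ) (n : ℕ) (hn : 0 < n) (hco : IsCoprime ((n:ℤ)) b) :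
    ∑ i ∈ Finset.range n, (a + b*i) % (n:ℤ) = ∑ x ∈ Finset.Ico (0:ℤ) n, x := by
  rw [← affine_image a b n hn hco]
  rw [Finset.sum_image]
  intro i hi i' hi' h
  simp only [Finset.mem_coe, Finset.mem_range] at hi hi'
  exact affine_injOn a b n hco i i' hi hi' h

lemma key_count (j m : ℕ) (hj : 1 ≤ j)
    (hgcd : Nat.gcd m (2*j+1) = 1) (hgcd' : Nat.gcd (m+1) (2*j+1) = 1) (a : ℤ) :
    ((Finset.range (2*j+1)).filter
      (fun i : ℕ => (i:ℤ) ≤ (a + ((m:ℤ)+1)*i) % ((2*j+1 : ℕ) : ℤ)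
        ∧ (a + ((m:ℤ)+1)*i) % ((2*j+1 : ℕ) : ℤ) < 2*j)).card = j := by
  set n : ℕ := 2*j+1 with hn
  have hn0 : 0 < n := by omega
  have hN : (0:ℤ) < (n:ℤ) := by exact_mod_cast hn0
  set u : ℕ → ℤ := fun i => (a + ((m:ℤ)+1)*i) % (n:ℤ) with hu
  set d : ℕ → ℤ := fun i => (a + (m:ℤ)*i) % (n:ℤ) with hdd
  show ((Finset.range n).filter (fun i : ℕ => (i:ℤ) ≤ u i ∧ u i < 2*(j:ℤ))).card = j
  have hco' : IsCoprime ((n:ℤ)) ((m:ℤ)+1) := by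
    rw [Int.isCoprime_iff_gcd_eq_one, Int.gcd_comm]
    have : ((m:ℤ)+1) = ((m+1 : ℕ) : ℤ) := by push_cast; ring
    rw [this]
    exact hgcd'
  have hco : IsCoprime ((n:ℤ)) ((m:ℤ)) := by
    rw [Int.isCoprime_iff_gcd_eq_one, Int.gcd_comm]
    simpa using hgcd
  -- bounds
  have hub : ∀ i, 0 ≤ u i ∧ u i < n := fun i =>
    ⟨Int.emod_nonneg _ (ne_of_gt hN), Int.emod_lt_of_pos _ hN⟩
  -- pointwise identity
  have hpoint : ∀ i ∈ Finset.range n,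
      u i - i = d i - (n:ℤ) * (if u i < (i:ℤ) then 1 else 0) := by
    intro i hi
    simp only [Finset.mem_range] at hi
    have hiN : (i:ℤ) < n := by exact_mod_cast hi
    have h1 : (u i - i) % (n:ℤ) = d i := by
      rw [hu, hdd]
      simp only
      rw [Int.sub_emod, Int.emod_emod_of_dvd _ dvd_rfl, ← Int.sub_emod]
      congr 1
      ring
    have h2 := hub i
    by_cases hc : u i < (i:ℤ)
    · simp only [hc, if_true, mul_one]
      have h3 : (u i - i + n) % (n:ℤ) = d i := by
        rw [← Int.emod_eq_add_self_emod, h1]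
      rw [← h3, Int.emod_eq_of_lt (by omega) (by omega)]
      ring
    · simp only [hc, if_false, mul_zero, sub_zero]
      push_neg at hc
      rw [← h1, Int.emod_eq_of_lt (by omega) (by omega)]
  -- sum equalities
  have hsum_u : ∑ i ∈ Finset.range n, u i = ∑ x ∈ Finset.Ico (0:ℤ) n, x :=
    affine_sum a ((m:ℤ)+1) n hn0 hco'
  have hsum_d : ∑ i ∈ Finset.range n, d i = ∑ x ∈ Finset.Ico (0:ℤ) n, x :=
    affine_sum a (m:ℤ) n hn0 hco
  set K : ℕ := ((Finset.range n).filter (fun i : ℕ => u i < (i:ℤ))).card with hK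
  have hsum3 : ∑ i ∈ Finset.range n, (u i - (i:ℤ))
      = ∑ i ∈ Finset.range n, d i - (n:ℤ) * K := by
    rw [Finset.sum_congr rfl hpoint, Finset.sum_sub_distrib, ← Finset.mul_sum]
    congr 1
    rw [Finset.sum_boole, hK]
  have hgaussN : (∑ i ∈ Finset.range n, i) = n * j := by
    have h2 : (∑ i ∈ Finset.range n, i) * 2 = n * (n-1) := Finset.sum_range_id_mul_two n
    have h4 : n - 1 = 2*j := by omega
    have h3 : n * (n - 1) = (n * j) * 2 := by rw [h4, hn]; ring
    exact Nat.eq_of_mul_eq_mul_right (by norm_num) (h2.trans h3)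
  have hgauss : (∑ i ∈ Finset.range n, (i:ℤ)) = (n:ℤ) * j := by
    have hc := congrArg (Nat.cast : ℕ → ℤ) hgaussN
    push_cast at hc
    exact hc
  have hKj : K = j := by
    rw [Finset.sum_sub_distrib, hsum_u, hsum_d, hgauss] at hsum3
    have h5 : (n:ℤ) * K = (n:ℤ) * j := by linarith
    have := mul_left_cancel₀ (ne_of_gt hN) h5
    exact_mod_cast this
  have hsplitP := Finset.card_filter_add_card_filter_not
    (s := Finset.range n) (p := fun i => u i < (i:ℤ))
  have hfneg : (Finset.range n).filter (fun i : ℕ => ¬ (u i < (i:ℤ)))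
      = (Finset.range n).filter (fun i : ℕ => (i:ℤ) ≤ u i) := by
    apply Finset.filter_congr; intro x _; simp [not_lt]
  have cardP : ((Finset.range n).filter (fun i : ℕ => (i:ℤ) ≤ u i)).card = j + 1 := by
    rw [← hfneg]
    rw [← hK] at hsplitP
    rw [Finset.card_range] at hsplitP
    omega
  -- unique preimage of 2j
  obtain ⟨i0, hi0mem, hi0⟩ : ∃ i0 ∈ Finset.range n, u i0 = 2*(j:ℤ) := by
    have hmem : (2*(j:ℤ)) ∈ Finset.Ico (0:ℤ) n := by
      simp only [Finset.mem_Ico]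
      constructor
      · positivity
      · rw [hn]; push_cast; linarith
    rw [← affine_image a ((m:ℤ)+1) n hn0 hco'] at hmem
    simpa only [Finset.mem_image] using hmem
  have hone : ((Finset.range n).filter (fun i : ℕ => u i = 2*(j:ℤ))).card = 1 := by
    rw [Finset.card_eq_one]
    refine ⟨i0, ?_⟩
    ext x
    simp only [Finset.mem_filter, Finset.mem_range, Finset.mem_singleton]
    constructor
    · rintro ⟨hx, hux⟩
      exact affine_injOn a ((m:ℤ)+1) n hco' x i0 hx (Finset.mem_range.mp hi0mem)
        (hux.trans hi0.symm)
    · rintro rfl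
      exact ⟨Finset.mem_range.mp hi0mem, hi0⟩
  -- split
  have hsplit := Finset.card_filter_add_card_filter_not
    (s := (Finset.range n).filter (fun i : ℕ => (i:ℤ) ≤ u i)) (p := fun i => u i < 2*(j:ℤ))
  rw [Finset.filter_filter, Finset.filter_filter, cardP] at hsplit
  have heq2 : (Finset.range n).filter (fun i : ℕ => (i:ℤ) ≤ u i ∧ ¬ (u i < 2*(j:ℤ)))
      = (Finset.range n).filter (fun i : ℕ => u i = 2*(j:ℤ)) := by
    apply Finset.filter_congr
    intro x hx
    simp only [Finset.mem_range] at hx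
    have hb := hub x
    have hxn : (x:ℤ) < n := by exact_mod_cast hx
    have hnval : (n:ℤ) = 2*(j:ℤ)+1 := by rw [hn]; push_cast; ring
    simp only [not_lt, eq_iff_iff]
    constructor
    · rintro ⟨h1, h2⟩; omega
    · intro h; omega
  rw [heq2, hone] at hsplit
  omega

lemma bridge (j m : ℕ) (hj : 1 ≤ j)
    (hgcd : Nat.gcd m (2*j+1) = 1) (hgcd' : Nat.gcd (m+1) (2*j+1) = 1) (s t : ℤ) :
    ((Finset.range (2*j)).filter
      (fun i : ℕ => ((s+(i:ℤ))*(m:ℤ) - t) % ((2*j+1 : ℕ) : ℤ) < 2*(j:ℤ) - i)).card = j := by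
  have hkey := key_count j m hj hgcd hgcd' (s*(m:ℤ) - t)
  set N : ℤ := ((2*j+1 : ℕ) : ℤ) with hN
  have hNval : N = 2*(j:ℤ)+1 := by rw [hN]; push_cast; ring
  have hNpos : 0 < N := by omega
  set r : ℕ → ℤ := fun i => ((s+(i:ℤ))*(m:ℤ) - t) % N with hr
  set u : ℕ → ℤ := fun i => (s*(m:ℤ) - t + ((m:ℤ)+1)*(i:ℤ)) % N with hu
  show ((Finset.range (2*j)).filter (fun i : ℕ => r i < 2*(j:ℤ) - i)).card = j
  have hkey' : ((Finset.range (2*j+1)).filter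
      (fun i : ℕ => (i:ℤ) ≤ u i ∧ u i < 2*(j:ℤ))).card = j := hkey
  have hrb : ∀ x : ℕ, 0 ≤ r x ∧ r x < N := fun x =>
    ⟨Int.emod_nonneg _ (ne_of_gt hNpos), Int.emod_lt_of_pos _ hNpos⟩
  have hub : ∀ x : ℕ, 0 ≤ u x ∧ u x < N := fun x =>
    ⟨Int.emod_nonneg _ (ne_of_gt hNpos), Int.emod_lt_of_pos _ hNpos⟩
  have hrel : ∀ x : ℕ, u x = (r x + x) % N := by
    intro x
    rw [hu, hr]
    simp only
    rw [Int.emod_add_emod]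
    congr 1
    ring
  clear_value N r u
  have hfeq : (Finset.range (2*j)).filter (fun i : ℕ => r i < 2*(j:ℤ) - i)
      = (Finset.range (2*j+1)).filter (fun i : ℕ => (i:ℤ) ≤ u i ∧ u i < 2*(j:ℤ)) := by
    ext x
    simp only [Finset.mem_filter, Finset.mem_range]
    have hrbx := hrb x
    have hubx := hub x
    have hrelx := hrel x
    by_cases hx : x < 2*j+1
    case neg => omega
    by_cases hcase : r x + x < N
    · have hue : u x = r x + x := by
        rw [hrelx, Int.emod_eq_of_lt (by omega) hcase]
      omega
    · have hue : u x = r x + x - N := by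
        rw [hrelx, Int.emod_eq_sub_self_emod, Int.emod_eq_of_lt (by omega) (by omega)]
      omega
  rw [hfeq]
  exact hkey'

theorem stmt7 (j m : ℕ) (hj : 1 ≤ j) (hm1 : 1 ≤ m) (hm2 : m ≤ 2 * j + 1)
    (hgcd : Nat.gcd m (2 * j + 1) = 1) (hgcd' : Nat.gcd (m + 1) (2 * j + 1) = 1)
    (s t : ℤ) :
    (Lam m j ∩ ((fun p : ℝ × ℝ => ((s : ℝ) + p.1, (t : ℝ) + p.2)) '' Sstair j)).ncard = j := by
  classical
  set N : ℤ := ((2*j+1 : ℕ) : ℤ) with hN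
  have hNval : N = 2*(j:ℤ)+1 := by rw [hN]; push_cast; ring
  have hNpos : 0 < N := by omega
  set r : ℕ → ℤ := fun i => ((s+(i:ℤ))*(m:ℤ) - t) % N with hr
  set F : Finset ℕ := (Finset.range (2*j)).filter (fun i : ℕ => r i < 2*(j:ℤ) - i) with hF
  set φ : ℕ → ℝ × ℝ := fun i => ((s:ℝ) + i, (t:ℝ) + (r i : ℝ)) with hphi
  have hrb : ∀ x : ℕ, 0 ≤ r x ∧ r x < N := fun x =>
    ⟨Int.emod_nonneg _ (ne_of_gt hNpos), Int.emod_lt_of_pos _ hNpos⟩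
  have hset : Lam m j ∩ ((fun p : ℝ × ℝ => ((s : ℝ) + p.1, (t : ℝ) + p.2)) '' Sstair j)
      = ↑(F.image φ) := by
    ext p
    simp only [Set.mem_inter_iff, Set.mem_image, Finset.coe_image, Finset.mem_coe, Lam,
      Set.mem_setOf_eq]
    constructor
    · rintro ⟨⟨c₁, c₂, rfl⟩, q, hq, hpq⟩
      rw [Sstair] at hq
      simp only [Set.mem_iUnion, Finset.mem_range, Set.mem_prod, Set.mem_Ico] at hq
      obtain ⟨i, hi, ⟨hq1, hq2⟩, hq3, hq4⟩ := hq
      have hpx : (s:ℝ) + q.1 = (c₁:ℝ) := congrArg Prod.fst hpq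
      have hpy : (t:ℝ) + q.2 = (c₁:ℝ) * m + (c₂:ℝ) * (2 * (j:ℝ) + 1) := congrArg Prod.snd hpq
      have hq1' : ((i:ℤ):ℝ) ≤ ((c₁ - s : ℤ):ℝ) := by push_cast; linarith
      have hq2' : ((c₁ - s : ℤ):ℝ) < ((i:ℤ):ℝ) + 1 := by push_cast; linarith
      have hle1 : (i:ℤ) ≤ c₁ - s := by exact_mod_cast hq1'
      have hle2 : c₁ - s < (i:ℤ) + 1 := by exact_mod_cast (by push_cast at hq2' ⊢; linarith : ((c₁ - s : ℤ):ℝ) < (((i:ℤ) + 1 : ℤ):ℝ))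
      have hc1 : c₁ = s + i := by omega
      set y : ℤ := c₁ * (m:ℤ) + c₂ * N with hy
      have hyR : ((y:ℤ):ℝ) = (c₁:ℝ) * m + (c₂:ℝ) * (2 * (j:ℝ) + 1) := by
        rw [hy, hN]; push_cast; ring
      have hq2eq : q.2 = ((y - t : ℤ):ℝ) := by push_cast; rw [hyR]; linarith
      have hyt1 : 0 ≤ y - t := by
        have : (0:ℝ) ≤ ((y - t : ℤ):ℝ) := by rw [← hq2eq]; exact hq3
        exact_mod_cast this
      have hyt2 : y - t < 2*(j:ℤ) - i := by
        have : ((y - t : ℤ):ℝ) < ((2*(j:ℤ) - (i:ℤ) : ℤ):ℝ) := by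
          rw [← hq2eq]; push_cast; linarith
        exact_mod_cast this
      have hri : r i = y - t := by
        rw [hr]
        simp only
        have heq : (s+(i:ℤ))*(m:ℤ) - t = (y - t) + N * (-c₂) := by rw [hy, hc1]; ring
        rw [heq, Int.add_mul_emod_self_left, Int.emod_eq_of_lt hyt1 (by omega)]
      refine ⟨i, Finset.mem_filter.mpr ⟨Finset.mem_range.mpr hi, by rw [hri]; omega⟩, ?_⟩
      rw [hphi]
      simp only
      refine Prod.ext ?_ ?_
      · simp only
        rw [hc1]; push_cast; ring
      · simp only
        rw [hri]
        push_cast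
        rw [hyR]
        push_cast
        ring
    · rintro ⟨i, hiF, rfl⟩
      obtain ⟨hi, hcond⟩ := Finset.mem_filter.mp hiF
      rw [Finset.mem_range] at hi
      constructor
      · set c₂ : ℤ := -(((s+(i:ℤ))*(m:ℤ) - t) / N) with hc2
        refine ⟨s + i, c₂, ?_⟩
        have hint : t + r i = (s + (i:ℤ)) * (m:ℤ) + c₂ * (2*(j:ℤ)+1) := by
          rw [hc2, ← hNval, hr]
          simp only
          rw [Int.emod_def]
          ring
        have hintR := congrArg (fun z : ℤ => (z:ℝ)) hint
        push_cast at hintR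
        rw [hphi]
        simp only
        refine Prod.ext ?_ ?_
        · simp only; push_cast; ring
        · simp only
          push_cast
          rw [hintR]
      · refine ⟨((i:ℝ), ((r i:ℤ):ℝ)), ?_, ?_⟩
        · rw [Sstair]
          simp only [Set.mem_iUnion, Finset.mem_range, Set.mem_prod, Set.mem_Ico]
          refine ⟨i, hi, ⟨le_refl _, by linarith⟩, ?_, ?_⟩
          · have := (hrb i).1
            exact_mod_cast this
          · have : ((r i : ℤ):ℝ) < ((2*(j:ℤ) - (i:ℤ) : ℤ):ℝ) := by exact_mod_cast hcond
            push_cast at this ⊢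
            linarith
        · rw [hphi]
  rw [hset, Set.ncard_coe_finset, Finset.card_image_of_injOn]
  · exact bridge j m hj hgcd hgcd' s t
  · intro a ha b hb h
    have h1 : (s:ℝ) + a = (s:ℝ) + b := congrArg Prod.fst h
    have : (a:ℝ) = (b:ℝ) := by linarith
    exact_mod_cast this
end

section
/- Suppose 1 ≤ m ≤ 2j+1 and gcd(m, 2j+1) = gcd(m+1, 2j+1) = 1. Then for every (x,y) ∈ R^2, the number of lattice points of Λ(m,j) in the translate (x,y)+S(j) is exactly j; that is, S(j) + Λ(m,j) is an exact j-fold lattice tiling of the plane. -/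
open Finset

lemma floor_add_fract_div (NN : ℕ) (hN : 0 < NN) (K : ℤ) (hK : 0 ≤ K)
    (θ : ℝ) (hθ0 : 0 ≤ θ) (hθ1 : θ < 1) :
    ⌊((K : ℝ) + θ) / (NN : ℝ)⌋ = K / (NN : ℤ) := by
  have hNR : (0:ℝ) < (NN:ℝ) := by exact_mod_cast hN
  have hNZ : ((NN:ℤ)) ≠ 0 := by exact_mod_cast hN.ne'
  have hNZpos : (0:ℤ) < (NN:ℤ) := by exact_mod_cast hN
  have hmod1 : 0 ≤ K % (NN:ℤ) := Int.emod_nonneg K hNZ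
  have hmod2 : K % (NN:ℤ) < NN := Int.emod_lt_of_pos K hNZpos
  have hdef : K % (NN:ℤ) = K - (NN:ℤ) * (K / (NN:ℤ)) := Int.emod_def K (NN:ℤ)
  have h1 : (NN:ℤ) * (K / (NN:ℤ)) ≤ K := by omega
  have h2 : K + 1 ≤ (NN:ℤ) * (K / (NN:ℤ)) + NN := by omega
  have h1R : (NN:ℝ) * ((K / (NN:ℤ) : ℤ) : ℝ) ≤ (K:ℝ) := by exact_mod_cast h1
  have h2R : (K:ℝ) + 1 ≤ (NN:ℝ) * ((K / (NN:ℤ) : ℤ) : ℝ) + (NN:ℝ) := by exact_mod_cast h2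
  rw [Int.floor_eq_iff]
  constructor
  · rw [le_div_iff₀ hNR]
    linarith
  · rw [div_lt_iff₀ hNR]
    push_cast
    linarith

lemma rk_eq (NN : ℕ) (hN : 0 < NN) (w : ℝ) (M : ℕ) :
    ⌈(w - M) / (NN:ℝ)⌉ * (NN:ℝ) - (w - M)
      = (((⌊⌈w / (NN:ℝ)⌉ * (NN:ℝ) - w⌋.toNat + M) % NN : ℕ) : ℝ)
        + Int.fract (⌈w / (NN:ℝ)⌉ * (NN:ℝ) - w) := by
  have hNR : (0:ℝ) < (NN:ℝ) := by exact_mod_cast hN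
  set c : ℤ := ⌈w / (NN:ℝ)⌉ with hc
  set r0 : ℝ := (c:ℝ) * (NN:ℝ) - w with hr0
  set a' : ℤ := ⌊r0⌋ with ha'
  set θ : ℝ := Int.fract r0 with hθ
  have hr0nonneg : 0 ≤ r0 := by
    have h := (div_le_iff₀ hNR).mp (Int.le_ceil (w / (NN:ℝ)))
    rw [← hc] at h
    rw [hr0]; linarith
  have ha'0 : 0 ≤ a' := Int.floor_nonneg.mpr hr0nonneg
  have hθ0 : 0 ≤ θ := Int.fract_nonneg r0
  have hθ1 : θ < 1 := Int.fract_lt_one r0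
  have hsplit : r0 = (a' : ℝ) + θ := by
    rw [ha', hθ]; exact (Int.floor_add_fract r0).symm
  have hw : w = (c:ℝ) * NN - (a':ℝ) - θ := by
    rw [hr0] at hsplit; linarith
  set K : ℤ := a' + (M:ℤ) with hK
  have hK0 : 0 ≤ K := by positivity
  have hceil : ⌈(w - M) / (NN:ℝ)⌉ = c - K / (NN:ℤ) := by
    have hdiv : (w - M) / (NN:ℝ) = (c:ℝ) - ((K:ℝ) + θ) / NN := by
      rw [hw, hK]; push_cast; field_simp; ring
    rw [hdiv,
      show ((c:ℝ) - ((K:ℝ)+θ)/NN) = -((((K:ℝ)+θ)/NN) - (c:ℝ)) by ring,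
      Int.ceil_neg, Int.floor_sub_intCast, floor_add_fract_div NN hN K hK0 θ hθ0 hθ1]
    ring
  have hKmod : K % (NN:ℤ) = (((a'.toNat + M) % NN : ℕ) : ℤ) := by
    have h1 : K = ((a'.toNat + M : ℕ) : ℤ) := by
      rw [hK]; push_cast [Int.toNat_of_nonneg ha'0]; ring
    rw [h1]; omega
  have hemod : ((K % (NN:ℤ) : ℤ) : ℝ) = (K:ℝ) - (NN:ℝ) * ((K / (NN:ℤ) : ℤ) : ℝ) := by
    have h := Int.emod_def K (NN:ℤ)
    exact_mod_cast congrArg (Int.cast : ℤ → ℝ) h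
  have hfin : (((a'.toNat + M) % NN : ℕ) : ℝ) = (K:ℝ) - (NN:ℝ) * ((K / (NN:ℤ) : ℤ) : ℝ) := by
    rw [← hemod, hKmod]
    norm_cast
  rw [hceil, hfin, hw, hK]
  push_cast
  ring

lemma comb (j m : ℕ) (hm : Nat.gcd m (2*j+1) = 1) (hm' : Nat.gcd (m+1) (2*j+1) = 1) (a : ℕ) :
    ((Finset.range (2*j)).filter (fun k => (a + k*m) % (2*j+1) + k < 2*j)).card = j := by
  set N := 2*j+1 with hNdef
  haveI : NeZero N := ⟨by omega⟩
  have hmc : Nat.Coprime m N := hm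
  have hmc' : Nat.Coprime (m+1) N := hm'
  set u : (ZMod N)ˣ := ZMod.unitOfCoprime m hmc with hu
  set u' : (ZMod N)ˣ := ZMod.unitOfCoprime (m+1) hmc' with hu'
  have hmu : ((m : ZMod N)) = ↑u := (ZMod.coe_unitOfCoprime m hmc).symm
  have hmu' : ((m : ZMod N) + 1) = ↑u' := by
    rw [hu', ZMod.coe_unitOfCoprime]; push_cast; ring
  let e : ZMod N ≃ ZMod N :=
    { toFun := fun z => (a : ZMod N) + z * m
      invFun := fun z => (z - a) * ↑u⁻¹
      left_inv := fun z => by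
        simp only [add_sub_cancel_left, hmu, mul_assoc, Units.mul_inv, mul_one]
      right_inv := fun z => by
        simp only [hmu, mul_assoc, Units.inv_mul, mul_one, add_sub_cancel] }
  let e' : ZMod N ≃ ZMod N :=
    { toFun := fun z => (a : ZMod N) + z * (m + 1)
      invFun := fun z => (z - a) * ↑u'⁻¹
      left_inv := fun z => by
        simp only [add_sub_cancel_left, hmu', mul_assoc, Units.mul_inv, mul_one]
      right_inv := fun z => by
        simp only [hmu', mul_assoc, Units.inv_mul, mul_one, add_sub_cancel] }
  set F : ZMod N → ℕ := fun z => ((a : ZMod N) + z * m).val with hF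
  set G : ZMod N → ℕ := fun z => ((a : ZMod N) + z * (m + 1)).val with hG
  have hvalsum : ∑ z : ZMod N, z.val = j * N := by
    have h1 : ∑ z : ZMod N, z.val = ∑ i ∈ Finset.range N, i :=
      Fin.sum_univ_eq_sum_range (fun i => i) N
    have h2 := Finset.sum_range_id_mul_two N
    have h3 : N * (N - 1) = (j * N) * 2 := by
      have h4 : N - 1 = 2*j := by omega
      rw [h4, hNdef]; ring
    omega
  have hFsum : ∑ z : ZMod N, F z = j * N := by
    rw [← hvalsum]
    exact Equiv.sum_comp e (ZMod.val)
  have hGsum : ∑ z : ZMod N, G z = j * N := by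
    rw [← hvalsum]
    exact Equiv.sum_comp e' (ZMod.val)
  -- key carry identity
  have key : ∀ z : ZMod N, F z + z.val = G z + (if N ≤ F z + z.val then N else 0) := by
    intro z
    have h1 : F z < N := ZMod.val_lt _
    have h2 : z.val < N := ZMod.val_lt _
    have hcast : ((F z + z.val : ℕ) : ZMod N) = (a : ZMod N) + z * (m + 1) := by
      push_cast [hF]
      rw [ZMod.natCast_rightInverse _, ZMod.natCast_rightInverse _]
      ring
    have hGmod : G z = (F z + z.val) % N := by
      rw [hG]
      simp only
      rw [← hcast, ZMod.val_natCast]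
    rcases lt_or_ge (F z + z.val) N with h | h
    · rw [if_neg (by omega), hGmod, Nat.mod_eq_of_lt h]
      omega
    · rw [if_pos h, hGmod, Nat.mod_eq_sub_mod h, Nat.mod_eq_of_lt (by omega)]
      omega
  set C := (Finset.univ.filter (fun z : ZMod N => N ≤ F z + z.val)).card with hC
  have hCsum : ∑ z : ZMod N, (if N ≤ F z + z.val then N else 0) = C * N := by
    rw [hC, Finset.card_eq_sum_ones, Finset.sum_mul, ← Finset.sum_filter]
    simp
  have hCj : C = j := by
    have h1 : ∑ z : ZMod N, (F z + z.val) = ∑ z : ZMod N, (G z + (if N ≤ F z + z.val then N else 0)) :=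
      Finset.sum_congr rfl (fun z _ => key z)
    rw [Finset.sum_add_distrib, Finset.sum_add_distrib, hFsum, hGsum, hvalsum, hCsum] at h1
    have : j * N = C * N := by omega
    have hN0 : 0 < N := by omega
    exact (Nat.eq_of_mul_eq_mul_right hN0 this).symm
  -- the set where F z + z.val = N - 1 has exactly one element
  have heq1 : (Finset.univ.filter (fun z : ZMod N => F z + z.val = N - 1)).card = 1 := by
    have hiff : ∀ z : ZMod N, (F z + z.val = N - 1) ↔ G z = N - 1 := by
      intro z
      have h1 : F z < N := ZMod.val_lt _
      have h2 : z.val < N := ZMod.val_lt _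
      have := key z
      rcases le_or_gt N (F z + z.val) with h | h
      · rw [if_pos h] at this; constructor <;> intro hh <;> omega
      · rw [if_neg (by omega)] at this; constructor <;> intro hh <;> omega
    have hGiff : ∀ z : ZMod N, G z = N - 1 ↔ z = e'.symm (((N - 1 : ℕ) : ZMod N)) := by
      intro z
      have hval : (((N - 1 : ℕ) : ZMod N)).val = N - 1 := ZMod.val_cast_of_lt (by omega)
      constructor
      · intro hh
        have : ((a : ZMod N) + z * (m + 1)) = ((N - 1 : ℕ) : ZMod N) := by
          apply ZMod.val_injective
          rw [hval]; exact hh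
        have : e' z = ((N - 1 : ℕ) : ZMod N) := this
        rw [← this, Equiv.symm_apply_apply]
      · intro hh
        subst hh
        have : e' (e'.symm (((N - 1 : ℕ) : ZMod N))) = ((N - 1 : ℕ) : ZMod N) :=
          Equiv.apply_symm_apply _ _
        rw [hG]; simp only
        have h2 : (a : ZMod N) + (e'.symm (((N - 1 : ℕ) : ZMod N))) * (m + 1) = ((N - 1 : ℕ) : ZMod N) := this
        rw [h2, hval]
    have : Finset.univ.filter (fun z : ZMod N => F z + z.val = N - 1) = {e'.symm (((N - 1 : ℕ) : ZMod N))} := by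
      ext z
      simp only [Finset.mem_filter, Finset.mem_univ, true_and, Finset.mem_singleton]
      rw [hiff z, hGiff z]
    rw [this, Finset.card_singleton]
  -- combine: count of z with F z + z.val < N - 1 is j
  have hsplit : (Finset.univ.filter (fun z : ZMod N => F z + z.val < N - 1)).card
      + (Finset.univ.filter (fun z : ZMod N => F z + z.val = N - 1)).card
      + C = N := by
    rw [hC]
    have h1 := Finset.card_filter_add_card_filter_not (s := (Finset.univ : Finset (ZMod N)))
      (p := fun z : ZMod N => F z + z.val < N)
    have h2 : Finset.univ.filter (fun z : ZMod N => F z + z.val < N)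
        = Finset.univ.filter (fun z : ZMod N => F z + z.val < N - 1)
          ∪ Finset.univ.filter (fun z : ZMod N => F z + z.val = N - 1) := by
      rw [← Finset.filter_or]
      apply Finset.filter_congr
      intro z _
      omega
    have h3 : Disjoint (Finset.univ.filter (fun z : ZMod N => F z + z.val < N - 1))
        (Finset.univ.filter (fun z : ZMod N => F z + z.val = N - 1)) := by
      rw [Finset.disjoint_left]
      intro z hz1 hz2
      simp only [Finset.mem_filter] at hz1 hz2
      omega
    have h4 : Finset.univ.filter (fun z : ZMod N => ¬ (F z + z.val < N))
        = Finset.univ.filter (fun z : ZMod N => N ≤ F z + z.val) := by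
      apply Finset.filter_congr; intro z _; omega
    rw [h2, Finset.card_union_of_disjoint h3, h4] at h1
    rw [h1]
    simp [Finset.card_univ, ZMod.card]
  have hAcard : (Finset.univ.filter (fun z : ZMod N => F z + z.val < N - 1)).card = j := by omega
  -- bridge to range
  have hbridge : ((Finset.range N).filter (fun k => (a + k*m) % N + k < 2*j)).card
      = (Finset.univ.filter (fun z : ZMod N => F z + z.val < N - 1)).card := by
    refine Finset.card_nbij (fun k : ℕ => (k : ZMod N)) ?_ ?_ ?_
    · intro k hk
      simp only [Finset.coe_filter, Set.mem_setOf_eq, Finset.mem_coe, Finset.mem_filter, Finset.mem_range] at hk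
      simp only [Finset.coe_filter, Set.mem_setOf_eq, Finset.mem_coe, Finset.mem_filter, Finset.mem_univ, true_and]
      have hv : ((k : ZMod N)).val = k := ZMod.val_cast_of_lt hk.1
      have hFv : F (k : ZMod N) = (a + k*m) % N := by
        rw [hF]; simp only
        have : (a : ZMod N) + (k : ZMod N) * m = ((a + k*m : ℕ) : ZMod N) := by push_cast; ring
        rw [this, ZMod.val_natCast]
      rw [hFv, hv]
      omega
    · intro k1 hk1 k2 hk2 hkk
      simp only [Finset.coe_filter, Set.mem_setOf_eq, Finset.mem_range] at hk1 hk2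
      have h1 : ((k1 : ZMod N)).val = k1 := ZMod.val_cast_of_lt hk1.1
      have h2 : ((k2 : ZMod N)).val = k2 := ZMod.val_cast_of_lt hk2.1
      rw [← h1, ← h2]
      exact congrArg ZMod.val hkk
    · intro z hz
      simp only [Finset.coe_filter, Set.mem_setOf_eq, Finset.mem_univ, true_and] at hz
      refine ⟨z.val, ?_, ZMod.natCast_rightInverse z⟩
      simp only [Finset.coe_filter, Set.mem_setOf_eq, Finset.mem_range]
      have hv : z.val < N := ZMod.val_lt _
      have hFv : F z = (a + z.val * m) % N := by
        rw [hF]; simp only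
        have : (a : ZMod N) + z * m = ((a + z.val*m : ℕ) : ZMod N) := by
          push_cast
          rw [ZMod.natCast_rightInverse z]
        rw [this, ZMod.val_natCast]
      constructor
      · exact hv
      · rw [← hFv]; omega
  have hfin : ((Finset.range N).filter (fun k => (a + k*m) % N + k < 2*j))
      = ((Finset.range (2*j)).filter (fun k => (a + k*m) % N + k < 2*j)) := by
    have : N = (2*j) + 1 := hNdef
    rw [this, Finset.range_add_one, Finset.filter_insert, if_neg (by omega)]
  rw [← hfin, hbridge, hAcard]

/-- S(j) + Λ(m,j) is an exact j-fold lattice tiling: every point of the plane lies in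
exactly j translates of S(j) by lattice vectors, equivalently the number of lattice
points in any translate (x,y) + S(j) is exactly j. -/
theorem stmt8 (j m : ℕ) (hj : 1 ≤ j) (hm1 : 1 ≤ m) (hm2 : m ≤ 2 * j + 1)
    (hgcd : Nat.gcd m (2 * j + 1) = 1) (hgcd' : Nat.gcd (m + 1) (2 * j + 1) = 1)
    (x y : ℝ) :
    (Lam m j ∩ ((fun p : ℝ × ℝ => (x + p.1, y + p.2)) '' Sstair j)).ncard = j := by
  have hNpos : 0 < 2*j+1 := by omega
  have hNR : (0:ℝ) < ((2*j+1 : ℕ):ℝ) := by exact_mod_cast hNpos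
  have hNcast : ((2*j+1 : ℕ):ℝ) = 2*(j:ℝ)+1 := by push_cast; ring
  set B : ℤ := ⌈x⌉ with hB
  have hBle : x ≤ (B:ℝ) := Int.le_ceil x
  have hBlt : (B:ℝ) < x + 1 := Int.ceil_lt_add_one x
  set w : ℝ := y - (B:ℝ) * (m:ℝ) with hw
  set a : ℕ := (⌊⌈w / ((2*j+1:ℕ):ℝ)⌉ * ((2*j+1:ℕ):ℝ) - w⌋).toNat with ha
  set θ : ℝ := Int.fract (⌈w / ((2*j+1:ℕ):ℝ)⌉ * ((2*j+1:ℕ):ℝ) - w) with hθ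
  have hθ0 : 0 ≤ θ := Int.fract_nonneg _
  have hθ1 : θ < 1 := Int.fract_lt_one _
  set c2 : ℕ → ℤ := fun k => ⌈(w - ((k*m : ℕ):ℝ)) / ((2*j+1:ℕ):ℝ)⌉ with hc2
  have hrk : ∀ k : ℕ, (c2 k : ℝ) * ((2*j+1:ℕ):ℝ) - (w - ((k*m:ℕ):ℝ))
      = (((a + k*m) % (2*j+1) : ℕ) : ℝ) + θ := fun k => rk_eq (2*j+1) hNpos w (k*m)
  have hlow : ∀ k : ℕ, (w - ((k*m:ℕ):ℝ)) ≤ (c2 k : ℝ) * ((2*j+1:ℕ):ℝ) := by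
    intro k
    exact (div_le_iff₀ hNR).mp (Int.le_ceil ((w - ((k*m:ℕ):ℝ)) / ((2*j+1:ℕ):ℝ)))
  have hcond : ∀ k : ℕ, ((c2 k : ℝ) * ((2*j+1:ℕ):ℝ) < (w - ((k*m:ℕ):ℝ)) + (2*(j:ℝ) - k)
      ↔ (a + k*m) % (2*j+1) + k < 2*j) := by
    intro k
    have h := hrk k
    constructor
    · intro hlt
      have h2 : (((a + k*m) % (2*j+1) : ℕ) : ℝ) + (k:ℝ) < 2*(j:ℝ) := by linarith
      exact_mod_cast h2
    · intro hlt
      have h2 : ((a + k*m) % (2*j+1) : ℕ) + k + 1 ≤ 2*j := hlt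
      have h3 : (((a + k*m) % (2*j+1) : ℕ):ℝ) + (k:ℝ) + 1 ≤ 2*(j:ℝ) := by exact_mod_cast h2
      linarith
  set Φ : ℕ → ℝ × ℝ := fun k =>
    (((B + (k:ℤ) : ℤ):ℝ), ((B + (k:ℤ) : ℤ):ℝ) * (m:ℝ) + ((c2 k : ℤ):ℝ) * (2*(j:ℝ)+1)) with hΦ
  have hset : Lam m j ∩ ((fun p : ℝ × ℝ => (x + p.1, y + p.2)) '' Sstair j)
      = Φ '' ↑((Finset.range (2*j)).filter (fun k => (a + k*m) % (2*j+1) + k < 2*j)) := by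
    ext p
    simp only [Set.mem_inter_iff, Set.mem_image, Lam, Set.mem_setOf_eq, Sstair,
      Set.mem_iUnion, Set.mem_prod, Set.mem_Ico, Finset.mem_range, exists_prop,
      Finset.coe_filter]
    constructor
    · rintro ⟨⟨c₁, cc₂, rfl⟩, q, ⟨i, hi, ⟨hq11, hq12⟩, hq21, hq22⟩, hpq⟩
      have hpq1 : x + q.1 = (c₁:ℝ) := congrArg Prod.fst hpq
      have hpq2 : y + q.2 = (c₁:ℝ)*(m:ℝ) + (cc₂:ℝ)*(2*(j:ℝ)+1) := congrArg Prod.snd hpq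
      have hc1 : c₁ = B + (i:ℤ) := by
        have h3 : B ≤ c₁ - (i:ℤ) := Int.ceil_le.mpr (by push_cast; linarith)
        have h4 : c₁ - (i:ℤ) < B + 1 := by
          have h5 : ((c₁ - (i:ℤ) : ℤ):ℝ) < (B:ℝ) + 1 := by push_cast; linarith
          exact_mod_cast h5
        omega
      have hv : (cc₂:ℝ) * ((2*j+1:ℕ):ℝ) = (w - ((i*m:ℕ):ℝ)) + q.2 := by
        rw [hNcast, hw]
        push_cast [hc1] at hpq2 ⊢
        linarith
      have hcc_low : (w - ((i*m:ℕ):ℝ)) ≤ (cc₂:ℝ) * ((2*j+1:ℕ):ℝ) := by rw [hv]; linarith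
      have hcc_high : (cc₂:ℝ) * ((2*j+1:ℕ):ℝ) < (w - ((i*m:ℕ):ℝ)) + (2*(j:ℝ) - i) := by
        rw [hv]; linarith
      have hcc : cc₂ = c2 i := by
        have hge : c2 i ≤ cc₂ := by
          rw [hc2]
          exact Int.ceil_le.mpr ((div_le_iff₀ hNR).mpr hcc_low)
        have hle : cc₂ ≤ c2 i := by
          by_contra hcon
          push_neg at hcon
          have h5 : c2 i + 1 ≤ cc₂ := hcon
          have h6 : ((c2 i : ℝ) + 1) * ((2*j+1:ℕ):ℝ) ≤ (cc₂:ℝ) * ((2*j+1:ℕ):ℝ) := by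
            apply mul_le_mul_of_nonneg_right _ hNR.le
            exact_mod_cast h5
          have h7 := hlow i
          rw [hNcast] at h6 h7 hcc_high
          have hi0 : (0:ℝ) ≤ (i:ℝ) := Nat.cast_nonneg i
          nlinarith [h6, h7, hcc_high]
        omega
      refine ⟨i, ⟨hi, (hcond i).mp (by rw [← hcc]; exact hcc_high)⟩, ?_⟩
      rw [hc1, hcc]
    · rintro ⟨k, ⟨hk, hPk⟩, rfl⟩
      constructor
      · exact ⟨B + (k:ℤ), c2 k, rfl⟩
      · refine ⟨(((B + (k:ℤ) : ℤ):ℝ) - x,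
          ((B + (k:ℤ) : ℤ):ℝ) * (m:ℝ) + ((c2 k : ℤ):ℝ) * (2*(j:ℝ)+1) - y),
          ⟨k, hk, ⟨?_, ?_⟩, ?_, ?_⟩, ?_⟩
        · push_cast; linarith
        · push_cast; linarith
        · have h7 := hlow k
          rw [hNcast] at h7
          push_cast at h7 ⊢
          rw [hw] at h7
          push_cast at h7
          linarith
        · have h8 := (hcond k).mpr hPk
          rw [hNcast] at h8
          push_cast at h8 ⊢
          rw [hw] at h8
          push_cast at h8
          linarith
        · simp only [hΦ, Prod.mk.injEq]
          constructor <;> ring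
  rw [hset]
  have hinj : Set.InjOn Φ
      ↑((Finset.range (2*j)).filter (fun k => (a + k*m) % (2*j+1) + k < 2*j)) := by
    intro k1 _ k2 _ hkk
    have h1 : ((B + (k1:ℤ) : ℤ):ℝ) = ((B + (k2:ℤ) : ℤ):ℝ) := congrArg Prod.fst hkk
    have h2 : (k1:ℝ) = (k2:ℝ) := by push_cast at h1; linarith
    exact_mod_cast h2
  rw [Set.ncard_image_of_injOn hinj, Set.ncard_coe_finset]
  exact comb j m hgcd hgcd' a
end

section
/- Suppose 1 ≤ m ≤ 2j+1 and gcd(m, 2j+1) = gcd(m+1, 2j+1) = 1. If for some (s,t) ∈ Z^2 the number of lattice points of Λ(m,j) in (s,t)+S(j) equals k, then for every (s',t') ∈ Z^2 the number of lattice points of Λ(m,j) in (s',t')+S(j) also equals k. -/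
lemma ediv_neg_one' {n : ℤ} (a : ℤ) (hn : 0 < n) (h1 : -n ≤ a) (h2 : a < 0) : a / n = -1 := by
  have h : a = (a + n) + (-1) * n := by ring
  rw [h, Int.add_mul_ediv_right _ _ (by omega : n ≠ 0),
      Int.ediv_eq_zero_of_lt (by omega) (by omega)]
  ring

lemma indicator_div (n x L : ℤ) (hn : 0 < n) (hL0 : 0 ≤ L) (hL : L < n) :
    (if x % n ≤ L then (1:ℤ) else 0) = x / n - (x - L - 1) / n := by
  have hx := Int.mul_ediv_add_emod x n
  have hr0 : 0 ≤ x % n := Int.emod_nonneg x (by omega)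
  have hrn : x % n < n := Int.emod_lt_of_pos x hn
  have key : x - L - 1 = (x % n - L - 1) + (x / n) * n := by linarith
  rw [key, Int.add_mul_ediv_right _ _ (by omega : n ≠ 0)]
  by_cases h : x % n ≤ L
  · rw [if_pos h, ediv_neg_one' (x % n - L - 1) hn (by omega) (by omega)]; ring
  · rw [if_neg h, Int.ediv_eq_zero_of_lt (by omega : (0:ℤ) ≤ x % n - L - 1) (by omega)]; ring


lemma sum_emod_eq (n' : ℕ) (hn : 0 < n') (a b c : ℤ)
    (hc : (c * a) % (n':ℤ) = 1 % (n':ℤ)) :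
    ∑ i ∈ Finset.range n', ((a * (i:ℤ) + b) % (n':ℤ)) = ∑ i ∈ Finset.range n', (i : ℤ) := by
  have hnz : (0:ℤ) < (n':ℤ) := by exact_mod_cast hn
  have hmod : ∀ k : ℤ, (c * ((a * k + b) % (n':ℤ) - b)) % (n':ℤ) = k % (n':ℤ) := by
    intro k
    have h1 : (a * k + b) % (n':ℤ) ≡ (a * k + b) [ZMOD (n':ℤ)] :=
      Int.emod_emod_of_dvd _ dvd_rfl
    have h2 : c * ((a * k + b) % (n':ℤ) - b) ≡ c * (a * k + b - b) [ZMOD (n':ℤ)] :=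
      ((h1.sub_right b).mul_left c)
    have h3 : c * (a * k + b - b) = (c * a) * k := by ring
    have h4 : (c * a) * k ≡ 1 * k [ZMOD (n':ℤ)] := Int.ModEq.mul_right k hc
    have := h2.trans (h3 ▸ h4)
    simp only [one_mul] at this; exact this
  refine Finset.sum_nbij' (i := fun i => ((a * (i:ℤ) + b) % (n':ℤ)).toNat)
    (j := fun i => ((c * ((i:ℤ) - b)) % (n':ℤ)).toNat) ?_ ?_ ?_ ?_ ?_
  · intro x hx
    beta_reduce
    simp only [Finset.mem_range] at *
    have h1 : (a * (x:ℤ) + b) % (n':ℤ) < (n':ℤ) := Int.emod_lt_of_pos _ hnz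
    have h2 : 0 ≤ (a * (x:ℤ) + b) % (n':ℤ) := Int.emod_nonneg _ (by omega)
    omega
  · intro x hx
    beta_reduce
    simp only [Finset.mem_range] at *
    have h1 : (c * ((x:ℤ) - b)) % (n':ℤ) < (n':ℤ) := Int.emod_lt_of_pos _ hnz
    have h2 : 0 ≤ (c * ((x:ℤ) - b)) % (n':ℤ) := Int.emod_nonneg _ (by omega)
    omega
  · intro x hx
    beta_reduce
    simp only [Finset.mem_range] at hx
    have hx' : ((x:ℤ)) % (n':ℤ) = x := Int.emod_eq_of_lt (by positivity) (by exact_mod_cast hx)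
    have h0 : 0 ≤ (a * (x:ℤ) + b) % (n':ℤ) := Int.emod_nonneg _ (by omega)
    have : (c * ((((a * (x:ℤ) + b) % (n':ℤ)).toNat : ℤ) - b)) % (n':ℤ) = x := by
      rw [Int.toNat_of_nonneg h0, hmod, hx']
    omega
  · intro x hx
    beta_reduce
    simp only [Finset.mem_range] at hx
    have h0 : 0 ≤ (c * ((x:ℤ) - b)) % (n':ℤ) := Int.emod_nonneg _ (by omega)
    -- show (a * toNat(...) + b) % n = x
    have key : (a * ((c * ((x:ℤ) - b)) % (n':ℤ)) + b) % (n':ℤ) = (x:ℤ) % (n':ℤ) := by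
      have h1 : (c * ((x:ℤ) - b)) % (n':ℤ) ≡ c * ((x:ℤ) - b) [ZMOD (n':ℤ)] :=
        Int.emod_emod_of_dvd _ dvd_rfl
      have h2 : a * ((c * ((x:ℤ) - b)) % (n':ℤ)) + b ≡ a * (c * ((x:ℤ) - b)) + b [ZMOD (n':ℤ)] :=
        (h1.mul_left a).add_right b
      have h3 : a * (c * ((x:ℤ) - b)) + b = (c * a) * ((x:ℤ) - b) + b := by ring
      have h4 : (c * a) * ((x:ℤ) - b) + b ≡ 1 * ((x:ℤ) - b) + b [ZMOD (n':ℤ)] :=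
        (Int.ModEq.mul_right _ hc).add_right b
      have := h2.trans (h3 ▸ h4)
      simp only [one_mul, sub_add_cancel] at this; exact this
    have hx' : ((x:ℤ)) % (n':ℤ) = x := Int.emod_eq_of_lt (by positivity) (by exact_mod_cast hx)
    have : (a * ((((c * ((x:ℤ) - b)) % (n':ℤ)).toNat : ℤ)) + b) % (n':ℤ) = x := by
      rw [Int.toNat_of_nonneg h0, key, hx']
    omega
  · intro x hx
    beta_reduce
    have h0 : 0 ≤ (a * (x:ℤ) + b) % (n':ℤ) := Int.emod_nonneg _ (by omega)
    exact (Int.toNat_of_nonneg h0).symm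


lemma count_filter_eq (j m : ℕ) (hj : 1 ≤ j) (A B u : ℤ)
    (hA : (A * (m:ℤ)) % (2*(j:ℤ)+1) = 1 % (2*(j:ℤ)+1))
    (hB : (B * ((m:ℤ)+1)) % (2*(j:ℤ)+1) = 1 % (2*(j:ℤ)+1)) :
    ((Finset.range (2*j)).filter
        (fun i : ℕ => ((m:ℤ) * (i:ℤ) + u) % (2*(j:ℤ)+1) < 2*(j:ℤ) - (i:ℤ))).card = j := by
  have hnpos : (0:ℤ) < 2*(j:ℤ)+1 := by positivity
  have hne : (2*(j:ℤ)+1) ≠ 0 := by omega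
  -- Gauss sum
  have G : ∑ i ∈ Finset.range (2*j+1), (i:ℤ) = (2*(j:ℤ)+1) * j := by
    have h3 : (∑ i ∈ Finset.range (2*j+1), i) = (2*j+1)*j := by
      have h := Finset.sum_range_id_mul_two (2*j+1)
      have e : 2*j+1-1 = 2*j := by omega
      rw [e] at h
      refine Nat.eq_of_mul_eq_mul_right (by norm_num : 0 < 2) ?_
      rw [h]; ring
    have := congrArg (Nat.cast : ℕ → ℤ) h3
    push_cast at this
    linarith [this]
  -- residue sums
  have hA2 : (A * (m:ℤ)) % ((2*j+1:ℕ):ℤ) = 1 % ((2*j+1:ℕ):ℤ) := by push_cast; exact hA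
  have hB2 : (B * ((m:ℤ)+1)) % ((2*j+1:ℕ):ℤ) = 1 % ((2*j+1:ℕ):ℤ) := by push_cast; exact hB
  have e1 := sum_emod_eq (2*j+1) (by omega) ((m:ℤ)) u A hA2
  have e2 := sum_emod_eq (2*j+1) (by omega) ((m:ℤ)+1) (u+1) B hB2
  push_cast at e1 e2
  -- div sums
  have hdiv : ∀ x : ℤ, (2*(j:ℤ)+1) * (x / (2*(j:ℤ)+1)) = x - x % (2*(j:ℤ)+1) := by
    intro x; have := Int.mul_ediv_add_emod x (2*(j:ℤ)+1); linarith
  have hF : (2*(j:ℤ)+1) * (∑ i ∈ Finset.range (2*j+1), ((m:ℤ)*(i:ℤ)+u)/(2*(j:ℤ)+1))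
      = (∑ i ∈ Finset.range (2*j+1), ((m:ℤ)*(i:ℤ)+u)) - (2*(j:ℤ)+1)*j := by
    rw [Finset.mul_sum, ← G, ← e1, ← Finset.sum_sub_distrib]
    exact Finset.sum_congr rfl (fun i _ => hdiv _)
  have hG : (2*(j:ℤ)+1) * (∑ i ∈ Finset.range (2*j+1), (((m:ℤ)+1)*(i:ℤ)+(u+1))/(2*(j:ℤ)+1))
      = (∑ i ∈ Finset.range (2*j+1), (((m:ℤ)+1)*(i:ℤ)+(u+1))) - (2*(j:ℤ)+1)*j := by
    rw [Finset.mul_sum, ← G, ← e2, ← Finset.sum_sub_distrib]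
    exact Finset.sum_congr rfl (fun i _ => hdiv _)
  have hlin : (∑ i ∈ Finset.range (2*j+1), ((m:ℤ)*(i:ℤ)+u))
      - (∑ i ∈ Finset.range (2*j+1), (((m:ℤ)+1)*(i:ℤ)+(u+1)))
      = -((2*(j:ℤ)+1)*j) - (2*(j:ℤ)+1) := by
    rw [← Finset.sum_sub_distrib]
    have h : ∀ i ∈ Finset.range (2*j+1), ((m:ℤ)*(i:ℤ)+u) - (((m:ℤ)+1)*(i:ℤ)+(u+1))
        = -(i:ℤ) - 1 := fun i _ => by ring
    rw [Finset.sum_congr rfl h, Finset.sum_sub_distrib, Finset.sum_neg_distrib, G,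
      Finset.sum_const, Finset.card_range]
    push_cast; ring
  have hFG : (∑ i ∈ Finset.range (2*j+1), ((m:ℤ)*(i:ℤ)+u)/(2*(j:ℤ)+1))
      - (∑ i ∈ Finset.range (2*j+1), (((m:ℤ)+1)*(i:ℤ)+(u+1))/(2*(j:ℤ)+1))
      = -(j:ℤ) - 1 := by
    apply mul_left_cancel₀ hne
    rw [mul_sub, hF, hG]
    linarith [hlin]
  -- boundary terms
  have hx1 : ((m:ℤ)*((2*j:ℕ):ℤ)+u)/(2*(j:ℤ)+1) = (u - (m:ℤ))/(2*(j:ℤ)+1) + m := by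
    have h : (m:ℤ)*((2*j:ℕ):ℤ)+u = (u - (m:ℤ)) + (2*(j:ℤ)+1) * m := by push_cast; ring
    rw [h, Int.add_mul_ediv_left _ _ hne]
  have hx2 : (((m:ℤ)+1)*((2*j:ℕ):ℤ)+(u+1))/(2*(j:ℤ)+1)
      = (u - (m:ℤ))/(2*(j:ℤ)+1) + ((m:ℤ)+1) := by
    have h : ((m:ℤ)+1)*((2*j:ℕ):ℤ)+(u+1) = (u - (m:ℤ)) + (2*(j:ℤ)+1) * ((m:ℤ)+1) := by
      push_cast; ring
    rw [h, Int.add_mul_ediv_left _ _ hne]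
  -- card as sum of indicators
  have card_eq : (((Finset.range (2*j)).filter
      (fun i : ℕ => ((m:ℤ) * (i:ℤ) + u) % (2*(j:ℤ)+1) < 2*(j:ℤ) - (i:ℤ))).card : ℤ)
      = ∑ i ∈ Finset.range (2*j),
          (if ((m:ℤ) * (i:ℤ) + u) % (2*(j:ℤ)+1) ≤ 2*(j:ℤ) - (i:ℤ) - 1 then (1:ℤ) else 0) := by
    rw [Finset.card_filter]
    push_cast
    refine Finset.sum_congr rfl (fun i _ => ?_)
    have hiff : (((m:ℤ) * (i:ℤ) + u) % (2*(j:ℤ)+1) < 2*(j:ℤ) - (i:ℤ))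
        ↔ (((m:ℤ) * (i:ℤ) + u) % (2*(j:ℤ)+1) ≤ 2*(j:ℤ) - (i:ℤ) - 1) := by omega
    simp only [hiff]
  have step : ∀ i ∈ Finset.range (2*j),
      (if ((m:ℤ) * (i:ℤ) + u) % (2*(j:ℤ)+1) ≤ 2*(j:ℤ) - (i:ℤ) - 1 then (1:ℤ) else 0)
      = ((m:ℤ)*(i:ℤ)+u)/(2*(j:ℤ)+1) - (((m:ℤ)+1)*(i:ℤ)+(u+1))/(2*(j:ℤ)+1) + 1 := by
    intro i hi
    rw [Finset.mem_range] at hi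
    have hi' : (i:ℤ) < 2*(j:ℤ) := by exact_mod_cast hi
    have hi0 : (0:ℤ) ≤ (i:ℤ) := Int.natCast_nonneg i
    rw [indicator_div (2*(j:ℤ)+1) ((m:ℤ)*(i:ℤ)+u) (2*(j:ℤ)-(i:ℤ)-1) hnpos (by omega) (by omega)]
    have h : ((m:ℤ)*(i:ℤ)+u) - (2*(j:ℤ)-(i:ℤ)-1) - 1
        = ((((m:ℤ)+1)*(i:ℤ)+(u+1)) + (-1) * (2*(j:ℤ)+1)) := by ring
    rw [h, Int.add_mul_ediv_right _ _ hne]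
    ring
  have main : (((Finset.range (2*j)).filter
      (fun i : ℕ => ((m:ℤ) * (i:ℤ) + u) % (2*(j:ℤ)+1) < 2*(j:ℤ) - (i:ℤ))).card : ℤ) = (j:ℤ) := by
    rw [card_eq, Finset.sum_congr rfl step]
    rw [Finset.sum_add_distrib, Finset.sum_sub_distrib, Finset.sum_const, Finset.card_range]
    have s1 := Finset.sum_range_succ (fun i : ℕ => ((m:ℤ)*(i:ℤ)+u)/(2*(j:ℤ)+1)) (2*j)
    have s2 := Finset.sum_range_succ (fun i : ℕ => (((m:ℤ)+1)*(i:ℤ)+(u+1))/(2*(j:ℤ)+1)) (2*j)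
    have hsm : (((2*j : ℕ)) • (1:ℤ)) = 2*(j:ℤ) := by push_cast; ring
    rw [hsm]
    rw [hx1] at s1
    rw [hx2] at s2
    linarith [hFG, s1, s2]
  exact_mod_cast main


lemma ncard_eq_card (j m : ℕ) (s' t' : ℤ) :
    (Lam m j ∩ ((fun p : ℝ × ℝ => ((s' : ℝ) + p.1, (t' : ℝ) + p.2)) '' Sstair j)).ncard
      = ((Finset.range (2*j)).filter
          (fun i : ℕ => ((m:ℤ) * (i:ℤ) + ((m:ℤ)*s' - t')) % (2*(j:ℤ)+1)
            < 2*(j:ℤ) - (i:ℤ))).card := by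
  have hnpos : (0:ℤ) < 2*(j:ℤ)+1 := by positivity
  have hset : Lam m j ∩ ((fun p : ℝ × ℝ => ((s' : ℝ) + p.1, (t' : ℝ) + p.2)) '' Sstair j)
      = (fun i : ℕ =>
          (((s' + (i:ℤ) : ℤ) : ℝ),
           ((t' + ((m:ℤ) * (i:ℤ) + ((m:ℤ)*s' - t')) % (2*(j:ℤ)+1) : ℤ) : ℝ)))
        '' ↑((Finset.range (2*j)).filter
          (fun i : ℕ => ((m:ℤ) * (i:ℤ) + ((m:ℤ)*s' - t')) % (2*(j:ℤ)+1)
            < 2*(j:ℤ) - (i:ℤ))) := by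
    ext p
    constructor
    · rintro ⟨⟨c₁, c₂, rfl⟩, q, hq, hpq⟩
      obtain ⟨i, hi, ⟨hq11, hq12⟩, hq21, hq22⟩ := by
        simpa only [Sstair, Set.mem_iUnion, Finset.mem_range, Set.mem_prod,
          Set.mem_Ico, exists_prop] using hq
      have hp1 : (s' : ℝ) + q.1 = (c₁ : ℝ) := congrArg Prod.fst hpq
      have hp2 : (t' : ℝ) + q.2 = (c₁ : ℝ) * m + (c₂ : ℝ) * (2 * j + 1) :=
        congrArg Prod.snd hpq
      have hq1 : q.1 = ((c₁ - s' : ℤ) : ℝ) := by push_cast; linarith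
      have hci1 : (i : ℤ) ≤ c₁ - s' := by
        rw [hq1] at hq11; exact_mod_cast hq11
      have hci2 : c₁ - s' < (i : ℤ) + 1 := by
        rw [hq1] at hq12; exact_mod_cast hq12
      have hc1 : c₁ = s' + (i : ℤ) := by omega
      have hq2 : q.2 = ((c₁ * m + c₂ * (2*(j:ℤ)+1) - t' : ℤ) : ℝ) := by push_cast; linarith
      have hw0 : 0 ≤ c₁ * m + c₂ * (2*(j:ℤ)+1) - t' := by
        rw [hq2] at hq21; exact_mod_cast hq21
      have hwlt : c₁ * m + c₂ * (2*(j:ℤ)+1) - t' < 2*(j:ℤ) - (i:ℤ) := by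
        rw [hq2] at hq22
        have : ((c₁ * m + c₂ * (2*(j:ℤ)+1) - t' : ℤ):ℝ) < ((2*(j:ℤ) - (i:ℤ) : ℤ) : ℝ) := by
          push_cast; linarith
        exact_mod_cast this
      have hwmod : ((m:ℤ) * (i:ℤ) + ((m:ℤ)*s' - t')) % (2*(j:ℤ)+1)
          = c₁ * m + c₂ * (2*(j:ℤ)+1) - t' := by
        have h1 : (m:ℤ) * (i:ℤ) + ((m:ℤ)*s' - t')
            = (c₁ * m + c₂ * (2*(j:ℤ)+1) - t') + (-c₂) * (2*(j:ℤ)+1) := by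
          rw [hc1]; ring
        rw [h1, Int.add_mul_emod_self_right]
        exact Int.emod_eq_of_lt hw0 (by omega)
      refine ⟨i, ?_, ?_⟩
      · simp only [Finset.coe_filter, Set.mem_setOf_eq, Finset.mem_range]
        exact ⟨hi, by rw [hwmod]; exact hwlt⟩
      · simp only
        rw [hwmod]
        rw [Prod.mk.injEq]
        constructor
        · rw [hc1]
        · push_cast [hc1]; ring
    · rintro ⟨i, hiF, rfl⟩
      simp only [Finset.coe_filter, Set.mem_setOf_eq, Finset.mem_range] at hiF
      obtain ⟨hi, hcond⟩ := hiF
      have hr0 : 0 ≤ ((m:ℤ) * (i:ℤ) + ((m:ℤ)*s' - t')) % (2*(j:ℤ)+1) :=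
        Int.emod_nonneg _ (by omega)
      constructor
      · refine ⟨s' + (i:ℤ), -(((m:ℤ) * (i:ℤ) + ((m:ℤ)*s' - t')) / (2*(j:ℤ)+1)), ?_⟩
        have key : t' + ((m:ℤ) * (i:ℤ) + ((m:ℤ)*s' - t')) % (2*(j:ℤ)+1)
            = (s' + (i:ℤ)) * m
              + (-(((m:ℤ) * (i:ℤ) + ((m:ℤ)*s' - t')) / (2*(j:ℤ)+1))) * (2*(j:ℤ)+1) := by
          have hemod := Int.emod_def ((m:ℤ) * (i:ℤ) + ((m:ℤ)*s' - t')) (2*(j:ℤ)+1)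
          rw [hemod]; ring
        rw [Prod.mk.injEq]
        refine ⟨rfl, ?_⟩
        have h2 := congrArg (Int.cast : ℤ → ℝ) key
        push_cast at h2 ⊢
        linarith
      · refine ⟨((i:ℝ), ((((m:ℤ) * (i:ℤ) + ((m:ℤ)*s' - t')) % (2*(j:ℤ)+1) : ℤ):ℝ)), ?_, ?_⟩
        · simp only [Sstair, Set.mem_iUnion, Finset.mem_range, Set.mem_prod, Set.mem_Ico,
            exists_prop]
          refine ⟨i, hi, ⟨le_refl _, by linarith [lt_add_one ((i:ℝ))]⟩, ?_, ?_⟩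
          · exact_mod_cast hr0
          · have : ((((m:ℤ) * (i:ℤ) + ((m:ℤ)*s' - t')) % (2*(j:ℤ)+1) : ℤ):ℝ)
                < ((2*(j:ℤ) - (i:ℤ) : ℤ):ℝ) := by exact_mod_cast hcond
            push_cast at this ⊢
            linarith
        · simp only
          rw [Prod.mk.injEq]
          constructor <;> push_cast <;> ring
  have hinj : Set.InjOn (fun i : ℕ =>
          (((s' + (i:ℤ) : ℤ) : ℝ),
           ((t' + ((m:ℤ) * (i:ℤ) + ((m:ℤ)*s' - t')) % (2*(j:ℤ)+1) : ℤ) : ℝ)))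
      ↑((Finset.range (2*j)).filter
          (fun i : ℕ => ((m:ℤ) * (i:ℤ) + ((m:ℤ)*s' - t')) % (2*(j:ℤ)+1)
            < 2*(j:ℤ) - (i:ℤ))) := by
    intro a ha b hb hab
    have h1 : ((s' + (a:ℤ) : ℤ) : ℝ) = ((s' + (b:ℤ) : ℤ) : ℝ) := congrArg Prod.fst hab
    have : s' + (a:ℤ) = s' + (b:ℤ) := by exact_mod_cast h1
    omega
  rw [hset, Set.ncard_image_of_injOn hinj, Set.ncard_coe_finset]

theorem stmt9 (j m k : ℕ) (hj : 1 ≤ j) (hm1 : 1 ≤ m) (hm2 : m ≤ 2 * j + 1)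
    (hgcd : Nat.gcd m (2 * j + 1) = 1) (hgcd' : Nat.gcd (m + 1) (2 * j + 1) = 1)
    (s t : ℤ)
    (hk : (Lam m j ∩ ((fun p : ℝ × ℝ => ((s : ℝ) + p.1, (t : ℝ) + p.2)) '' Sstair j)).ncard = k) :
    ∀ s' t' : ℤ,
      (Lam m j ∩ ((fun p : ℝ × ℝ => ((s' : ℝ) + p.1, (t' : ℝ) + p.2)) '' Sstair j)).ncard = k := by
  have bez1 := Nat.gcd_eq_gcd_ab m (2*j+1)
  rw [hgcd] at bez1
  push_cast at bez1
  have bez2 := Nat.gcd_eq_gcd_ab (m+1) (2*j+1)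
  rw [hgcd'] at bez2
  push_cast at bez2
  have hA : ((Nat.gcdA m (2*j+1)) * (m:ℤ)) % (2*(j:ℤ)+1) = 1 % (2*(j:ℤ)+1) := by
    have h : (Nat.gcdA m (2*j+1)) * (m:ℤ)
        = 1 + (2*(j:ℤ)+1) * (-(Nat.gcdB m (2*j+1))) := by linarith [bez1]
    rw [h, Int.add_mul_emod_self_left]
  have hB : ((Nat.gcdA (m+1) (2*j+1)) * ((m:ℤ)+1)) % (2*(j:ℤ)+1) = 1 % (2*(j:ℤ)+1) := by
    have h : (Nat.gcdA (m+1) (2*j+1)) * ((m:ℤ)+1)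
        = 1 + (2*(j:ℤ)+1) * (-(Nat.gcdB (m+1) (2*j+1))) := by linarith [bez2]
    rw [h, Int.add_mul_emod_self_left]
  have key : ∀ s' t' : ℤ,
      (Lam m j ∩ ((fun p : ℝ × ℝ => ((s' : ℝ) + p.1, (t' : ℝ) + p.2)) '' Sstair j)).ncard = j := by
    intro s' t'
    rw [ncard_eq_card j m s' t']
    exact count_filter_eq j m hj _ _ _ hA hB
  intro s' t'
  rw [key s' t', ← hk, key s t]
end

section
/- If n = p_1^{a_1} ⋯ p_s^{a_s} is the prime factorization of n and every prime p_i > k, then φ^k(n) = n · ∏_{i=1}^s (1 − k/p_i); if some p_i ≤ k then φ^k(n) = 0. -/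
def phik (k n : ℕ) : ℕ :=
  ((Finset.Icc 1 n).filter (fun m => ∀ i < k, Nat.gcd (m + i) n = 1)).card

lemma isUnit_prod {M N : Type*} [Monoid M] [Monoid N] {x : M × N} :
    IsUnit x ↔ IsUnit x.1 ∧ IsUnit x.2 := by
  constructor
  · intro h; exact ⟨h.map (MonoidHom.fst M N), h.map (MonoidHom.snd M N)⟩
  · rintro ⟨⟨u, hu⟩, ⟨v, hv⟩⟩
    exact ⟨⟨(↑u, ↑v), (↑u⁻¹, ↑v⁻¹), by ext <;> simp, by ext <;> simp⟩,
      by simp [Prod.ext_iff, hu, hv]⟩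

lemma phik_eq_card (k n : ℕ) [NeZero n] :
    phik k n = Nat.card {x : ZMod n // ∀ i < k, IsUnit (x + (i : ℕ))} := by
  classical
  have hn : 0 < n := Nat.pos_of_ne_zero (NeZero.ne n)
  rw [Nat.card_eq_fintype_card, Fintype.card_subtype]
  unfold phik
  refine Finset.card_bij (fun m _ => (m : ZMod n)) ?_ ?_ ?_
  · intro m hm
    simp only [Finset.mem_filter, Finset.mem_Icc, Finset.mem_univ, true_and] at hm ⊢
    intro i hi
    have h1 : IsUnit ((↑(m + i) : ZMod n)) := by
      rw [ZMod.isUnit_iff_coprime]; exact hm.2 i hi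
    simpa using h1
  · intro a ha b hb hab
    simp only [Finset.mem_filter, Finset.mem_Icc] at ha hb
    have h := (ZMod.natCast_eq_natCast_iff a b n).mp hab
    have h' : a % n = b % n := h
    rcases eq_or_lt_of_le ha.1.2 with h1 | h1 <;> rcases eq_or_lt_of_le hb.1.2 with h2 | h2
    · omega
    · rw [h1, Nat.mod_self, Nat.mod_eq_of_lt h2] at h'; omega
    · rw [h2, Nat.mod_self, Nat.mod_eq_of_lt h1] at h'; omega
    · rwa [Nat.mod_eq_of_lt h1, Nat.mod_eq_of_lt h2] at h'
  · intro x hx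
    simp only [Finset.mem_filter, Finset.mem_univ, true_and] at hx
    refine ⟨if x = 0 then n else x.val, ?_, ?_⟩
    · simp only [Finset.mem_filter, Finset.mem_Icc]
      have hcast : ((if x = 0 then n else x.val : ℕ) : ZMod n) = x := by
        split
        · simp [*]
        · simp [ZMod.natCast_val, ZMod.cast_id]
      constructor
      · constructor
        · split
          · omega
          · have : x.val ≠ 0 := by
              rw [Ne, ZMod.val_eq_zero]; assumption
            omega
        · split
          · exact le_refl n
          · exact (ZMod.val_lt x).le
      · intro i hi
        have h1 := hx i hi
        rw [← hcast] at h1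
        have h2 : IsUnit ((((if x = 0 then n else x.val) + i : ℕ)) : ZMod n) := by
          exact_mod_cast h1
        exact (ZMod.isUnit_iff_coprime _ n).mp h2
    · split
      · simp [*, ZMod.natCast_self]
      · simp [ZMod.natCast_val, ZMod.cast_id]

lemma phik_mul (k a b : ℕ) (ha : 0 < a) (hb : 0 < b) (hab : Nat.Coprime a b) :
    phik k (a * b) = phik k a * phik k b := by
  haveI : NeZero a := ⟨ha.ne'⟩
  haveI : NeZero b := ⟨hb.ne'⟩
  haveI : NeZero (a * b) := ⟨(Nat.mul_pos ha hb).ne'⟩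
  rw [phik_eq_card, phik_eq_card, phik_eq_card, ← Nat.card_prod]
  apply Nat.card_congr
  let e := ZMod.chineseRemainder hab
  have key : ∀ y : ZMod (a * b), IsUnit y ↔ IsUnit (e y) :=
    fun y => ⟨fun h => h.map e, fun h => by simpa using h.map e.symm⟩
  refine (Equiv.subtypeEquiv (q := fun x : ZMod a × ZMod b => ∀ i < k, IsUnit (x + (i : ℕ)))
      e.toEquiv ?_).trans
    ((Equiv.subtypeEquivRight
      (q := fun x : ZMod a × ZMod b =>
        (∀ i < k, IsUnit (x.1 + (i : ℕ))) ∧ (∀ i < k, IsUnit (x.2 + (i : ℕ)))) ?_).trans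
      (Equiv.subtypeProdEquivProd
        (p := fun y : ZMod a => ∀ i < k, IsUnit (y + (i : ℕ)))
        (q := fun y : ZMod b => ∀ i < k, IsUnit (y + (i : ℕ)))))
  · intro x
    constructor
    · intro h i hi
      have := (key _).mp (h i hi)
      simpa [map_add, map_natCast] using this
    · intro h i hi
      have := h i hi
      rw [key]
      simpa [map_add, map_natCast] using this
  · intro p
    simp only [isUnit_prod]
    constructor
    · intro h
      refine ⟨fun i hi => ?_, fun i hi => ?_⟩
      · have := (h i hi).1; simpa using this
      · have := (h i hi).2; simpa using this
    · intro h i hi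
      exact ⟨by simpa using h.1 i hi, by simpa using h.2 i hi⟩

lemma phik_prime_pow (k p a : ℕ) (hp : p.Prime) (hk1 : 1 ≤ k) (hk : k < p) (ha : 1 ≤ a) :
    phik k (p ^ a) = p ^ (a - 1) * (p - k) := by
  have hp0 : 0 < p := hp.pos
  have hcond : ∀ m : ℕ, (∀ i < k, Nat.gcd (m + i) (p ^ a) = 1) ↔
      (1 ≤ m % p ∧ m % p ≤ p - k) := by
    intro m
    have hdvd : ∀ x : ℕ, Nat.gcd x (p ^ a) = 1 ↔ ¬ p ∣ x := by
      intro x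
      rw [show (Nat.gcd x (p ^ a) = 1) ↔ Nat.Coprime x (p ^ a) from Iff.rfl,
        Nat.coprime_pow_right_iff ha, Nat.coprime_comm, hp.coprime_iff_not_dvd]
    constructor
    · intro h
      constructor
      · have h0 := (hdvd m).mp (by simpa using h 0 hk1)
        have : m % p ≠ 0 := fun hc => h0 (Nat.dvd_of_mod_eq_zero hc)
        omega
      · by_contra hc
        push_neg at hc
        have hr : m % p < p := Nat.mod_lt _ hp0
        set i := p - m % p with hi
        have hik : i < k := by omega
        have : p ∣ m + i := by
          have : (m + i) % p = (m % p + i) % p := by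
            conv_lhs => rw [Nat.add_mod, Nat.mod_eq_of_lt (by omega : i < p)]
          have h2 : m % p + i = p := by omega
          exact Nat.dvd_of_mod_eq_zero (by rw [this, h2, Nat.mod_self])
        exact (hdvd _).mp (h i hik) this
    · rintro ⟨h1, h2⟩ i hi
      rw [hdvd]
      intro hc
      have : (m + i) % p = (m % p + i) % p := by
        conv_lhs => rw [Nat.add_mod, Nat.mod_eq_of_lt (by omega : i < p)]
      have h3 : m % p + i < p := by omega
      have h4 : (m + i) % p = m % p + i := by rw [this, Nat.mod_eq_of_lt h3]
      have h5 : (m + i) % p = 0 := (Nat.mod_eq_zero_of_dvd hc)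
      omega
  classical
  unfold phik
  rw [Finset.filter_congr (fun m _ => hcond m)]
  rw [show p ^ (a - 1) * (p - k) = ((Finset.range (p ^ (a - 1))) ×ˢ (Finset.Icc 1 (p - k))).card by
    rw [Finset.card_product, Finset.card_range, Nat.card_Icc, Nat.add_sub_cancel]]
  refine Finset.card_nbij' (fun m => (m / p, m % p)) (fun q => q.1 * p + q.2) ?_ ?_ ?_ ?_
  · intro m hm
    simp only [Finset.mem_coe, Finset.mem_filter, Finset.mem_Icc, Finset.mem_product, Finset.mem_range] at hm ⊢
    obtain ⟨⟨hm1, hm2⟩, hr1, hr2⟩ := hm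
    have hmlt : m < p ^ a := by
      rcases eq_or_lt_of_le hm2 with h | h
      · exfalso
        have : p ∣ m := h ▸ dvd_pow_self p (by omega)
        have := Nat.mod_eq_zero_of_dvd this
        omega
      · exact h
    have hpa : p ^ a = p ^ (a - 1) * p := by
      rw [← pow_succ]; congr 1; omega
    refine ⟨?_, hr1, hr2⟩
    rw [Nat.div_lt_iff_lt_mul hp0]
    omega
  · intro q hq
    simp only [Finset.mem_coe, Finset.mem_filter, Finset.mem_Icc, Finset.mem_product, Finset.mem_range] at hq ⊢
    obtain ⟨hq1, hr1, hr2⟩ := hq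
    have hrp : q.2 < p := by omega
    have hmod : (q.1 * p + q.2) % p = q.2 := by
      rw [mul_comm, Nat.mul_add_mod, Nat.mod_eq_of_lt hrp]
    refine ⟨⟨by omega, ?_⟩, by omega, by omega⟩
    have hpa : p ^ a = p ^ (a - 1) * p := by
      rw [← pow_succ]; congr 1; omega
    calc q.1 * p + q.2 ≤ q.1 * p + p := by omega
    _ = (q.1 + 1) * p := by ring
    _ ≤ p ^ (a - 1) * p := Nat.mul_le_mul_right p (by omega)
    _ = p ^ a := hpa.symm
  · intro m _
    show m / p * p + m % p = m
    rw [mul_comm]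
    exact Nat.div_add_mod m p
  · intro q hq
    simp only [Finset.mem_coe, Finset.mem_product, Finset.mem_range, Finset.mem_Icc] at hq
    have hrp : q.2 < p := by omega
    have hmod : (q.1 * p + q.2) % p = q.2 := by
      rw [mul_comm, Nat.mul_add_mod, Nat.mod_eq_of_lt hrp]
    have hdiv : (q.1 * p + q.2) / p = q.1 := by
      rw [Nat.add_comm, Nat.add_mul_div_right _ _ hp0, Nat.div_eq_of_lt hrp, Nat.zero_add]
    exact Prod.ext hdiv hmod

lemma phik_zero_of_le (k n p : ℕ) (hp : p.Prime) (hpn : p ∣ n) (hpk : p ≤ k) :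
    phik k n = 0 := by
  unfold phik
  rw [Finset.card_eq_zero, Finset.filter_eq_empty_iff]
  intro m _ h
  have hp0 : 0 < p := hp.pos
  have hi : (p - m % p) % p < k := lt_of_lt_of_le (Nat.mod_lt _ hp0) hpk
  have hgcd := h _ hi
  have hdvd : p ∣ m + (p - m % p) % p := by
    rcases Nat.eq_zero_or_pos (m % p) with h0 | h0
    · have : (p - m % p) % p = 0 := by rw [h0, Nat.sub_zero, Nat.mod_self]
      rw [this, Nat.add_zero]
      exact Nat.dvd_of_mod_eq_zero h0
    · have hr : m % p < p := Nat.mod_lt _ hp0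
      have h1 : (p - m % p) % p = p - m % p := Nat.mod_eq_of_lt (by omega)
      rw [h1]
      apply Nat.dvd_of_mod_eq_zero
      rw [Nat.add_mod, Nat.mod_eq_of_lt (by omega : p - m % p < p)]
      have : m % p + (p - m % p) = p := by omega
      rw [this, Nat.mod_self]
  have := Nat.dvd_gcd hdvd hpn
  rw [hgcd, Nat.dvd_one] at this
  exact hp.one_lt.ne' this

lemma phik_one (k : ℕ) : phik k 1 = 1 := by
  unfold phik
  simp [Nat.gcd_one_right]

lemma phik_zero (k : ℕ) : phik k 0 = 0 := by
  unfold phik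
  simp

theorem stmt14 (k n : ℕ) (hk : 1 ≤ k) (hn : 1 ≤ n) :
    ((∀ p ∈ n.primeFactors, k < p) →
      (phik k n : ℚ) = n * ∏ p ∈ n.primeFactors, (1 - (k : ℚ) / p)) ∧
    ((∃ p ∈ n.primeFactors, p ≤ k) → phik k n = 0) := by
  constructor
  · intro hall
    have hne : n ≠ 0 := by omega
    have hmult : ∀ x y : ℕ, Nat.Coprime x y → phik k (x * y) = phik k x * phik k y := by
      intro x y hxy
      rcases Nat.eq_zero_or_pos x with hx | hx
      · subst hx; simp [phik_zero]
      rcases Nat.eq_zero_or_pos y with hy | hy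
      · subst hy; simp [phik_zero]
      exact phik_mul k x y hx hy hxy
    have hfact := Nat.multiplicative_factorization (phik k) hmult (phik_one k) hne
    rw [Finsupp.prod, Nat.support_factorization] at hfact
    have hn_eq : (n : ℚ) = ∏ p ∈ n.primeFactors, (p : ℚ) ^ (n.factorization p) := by
      conv_lhs => rw [← Nat.factorization_prod_pow_eq_self hne]
      rw [Finsupp.prod, Nat.support_factorization]
      push_cast
      rfl
    rw [hfact, Nat.cast_prod, hn_eq, ← Finset.prod_mul_distrib]
    apply Finset.prod_congr rfl
    intro p hp
    have hpp : p.Prime := Nat.prime_of_mem_primeFactors hp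
    have hkp : k < p := hall p hp
    have ha : 1 ≤ n.factorization p :=
      hpp.factorization_pos_of_dvd hne (Nat.dvd_of_mem_primeFactors hp)
    rw [phik_prime_pow k p _ hpp hk hkp ha]
    have hp0 : (p : ℚ) ≠ 0 := Nat.cast_ne_zero.mpr hpp.pos.ne'
    have hpa : (p : ℚ) ^ (n.factorization p) = (p : ℚ) ^ (n.factorization p - 1) * p := by
      rw [← pow_succ]; congr 1; omega
    push_cast [Nat.cast_sub hkp.le]
    rw [hpa]
    field_simp
  · rintro ⟨p, hp, hpk⟩
    exact phik_zero_of_le k n p (Nat.prime_of_mem_primeFactors hp)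
      (Nat.dvd_of_mem_primeFactors hp) hpk
end
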